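/- Let ω be a static environment on ℤ^{d₁+d₂} with finite jump range U which is autonomous in the first coordinates. Let 0 ≤ m < n−1, let z₁,…,z_{m+1} ∈ ℤ^{d₂} and y₁,…,y_n ∈ ℤ^{d₁}, and set x_i := (y_i, z_i) for 1 ≤ i ≤ m+1 and x₀ := 0. Then P_{0,ω}(X₁ = x₁, …, X_{m+1} = x_{m+1}, X^{(1)}_{m+2} = y_{m+2}, …, X^{(1)}_n = y_n) · P_{x_m,ω}(X^{(1)}₁ = y_{m+1}) = ω(x_m, x_{m+1} − x_m) · P_{0,ω}(X₁ = x₁, …, X_m = x_m, X^{(1)}_{m+1} = y_{m+1}, …, X^{(1)}_n = y_n). Equivalently, conditionally on the first-coordinate trajectory, (X^{(2)}_k) is a random walk in the time-dependent environment ω^Y defined by ω^Y_k(z,e) := ω(Y_k + (0,z), Y_{k+1} − Y_k + (0,e)) / ω(Y_k, Y_{k+1} − Y_k), where Y_k := (X^{(1)}_k, 0). -/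
import Mathlib


namespace AutonomousFirstCoordinates

/-- A point of `ℤ^{d₁+d₂}`, written as a pair of its first `d₁` and last `d₂`
coordinates. -/
abbrev Pt (d₁ d₂ : ℕ) := (Fin d₁ → ℤ) × (Fin d₂ → ℤ)

/-- A static environment: `ω x e` is the probability of a jump `e` from `x`. -/
abbrev SEnv (d₁ d₂ : ℕ) := Pt d₁ d₂ → Pt d₁ d₂ → ℝ

/-- `ω` is an honest static environment with jump range `U`. -/
def IsEnv (d₁ d₂ : ℕ) (U : Finset (Pt d₁ d₂)) (ω : SEnv d₁ d₂) : Prop :=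
  ∀ x, (∀ e ∈ U, 0 < ω x e) ∧ (∀ e, e ∉ U → ω x e = 0) ∧ (∑ e ∈ U, ω x e = 1)

/-- `P_{x,ω}(X₁^{(1)} = x^{(1)} + w)`: the probability that the first `d₁` coordinates of
the first jump equal `w`. -/
noncomputable def fstProb (d₁ d₂ : ℕ) (ω : SEnv d₁ d₂) (x : Pt d₁ d₂)
    (w : Fin d₁ → ℤ) : ℝ :=
  ∑' v : Fin d₂ → ℤ, ω x (w, v)

/-- The environment is autonomous in the first coordinates:
`P_{x,ω}(X₁^{(1)} = ·)` depends on `x` only through `x^{(1)}`. -/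
def Autonomous (d₁ d₂ : ℕ) (ω : SEnv d₁ d₂) : Prop :=
  ∀ x z : Pt d₁ d₂, x.1 = z.1 → ∀ w, fstProb d₁ d₂ ω x w = fstProb d₁ d₂ ω z w

/-- The probability of the exact trajectory `X 0 = 0, X 1 = xs 1, …, X n = xs n` under
`P_{0,ω}`. -/
def pathP (d₁ d₂ : ℕ) (ω : SEnv d₁ d₂) (n : ℕ) (X : Fin (n + 1) → Pt d₁ d₂) : ℝ :=
  (if X 0 = 0 then (1 : ℝ) else 0) *
    ∏ i : Fin n, ω (X i.castSucc) (X i.succ - X i.castSucc)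

open Pointwise

section Aux

variable {d₁ d₂ : ℕ} {U : Finset (Pt d₁ d₂)} {ω : SEnv d₁ d₂}

lemma mem_of_ne_zero (hω : IsEnv d₁ d₂ U ω) {x e : Pt d₁ d₂} (h : ω x e ≠ 0) : e ∈ U := by
  by_contra hc
  exact h ((hω x).2.1 e hc)

lemma fstProb_eq_sum (hω : IsEnv d₁ d₂ U ω) (x : Pt d₁ d₂) (w : Fin d₁ → ℤ) :
    fstProb d₁ d₂ ω x w = ∑ v ∈ U.image Prod.snd, ω x (w, v) := by
  refine tsum_eq_sum ?_
  intro v hv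
  by_contra h
  exact hv (Finset.mem_image_of_mem Prod.snd (mem_of_ne_zero hω h))

/-- Reachable positions after `j` steps. -/
def reach (U : Finset (Pt d₁ d₂)) : ℕ → Finset (Pt d₁ d₂)
  | 0 => {0}
  | j + 1 => reach U j + U

/-- A finite set of paths containing the support of `pathP`. -/
def pathFinset (U : Finset (Pt d₁ d₂)) (n : ℕ) : Finset (Fin (n + 1) → Pt d₁ d₂) :=
  Fintype.piFinset fun i : Fin (n + 1) => reach U (i : ℕ)

lemma mem_pathFinset_of_ne_zero (hω : IsEnv d₁ d₂ U ω) {n : ℕ}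
    {X : Fin (n + 1) → Pt d₁ d₂} (h : pathP d₁ d₂ ω n X ≠ 0) :
    X ∈ pathFinset U n := by
  unfold pathP at h
  have h0 : X 0 = 0 := by
    by_contra h0
    simp [h0] at h
  have hprod : ∀ i : Fin n, ω (X i.castSucc) (X i.succ - X i.castSucc) ≠ 0 := by
    intro i
    have h2 : (∏ i : Fin n, ω (X i.castSucc) (X i.succ - X i.castSucc)) ≠ 0 :=
      fun hz => h (by rw [hz, mul_zero])
    exact Finset.prod_ne_zero_iff.mp h2 i (Finset.mem_univ i)
  have key : ∀ j (hj : j < n + 1), X ⟨j, hj⟩ ∈ reach U j := by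
    intro j
    induction j with
    | zero =>
      intro hj
      have : (⟨0, hj⟩ : Fin (n + 1)) = 0 := rfl
      rw [this, h0]
      simp [reach]
    | succ j ih =>
      intro hj
      have hjn : j < n := by omega
      have hjn1 : j < n + 1 := by omega
      have e1 : (⟨j, hjn⟩ : Fin n).castSucc = (⟨j, hjn1⟩ : Fin (n + 1)) := rfl
      have e2 : (⟨j, hjn⟩ : Fin n).succ = (⟨j + 1, hj⟩ : Fin (n + 1)) := rfl
      have hm : X ⟨j + 1, hj⟩ =
          X ⟨j, hjn1⟩ + (X (⟨j, hjn⟩ : Fin n).succ - X (⟨j, hjn⟩ : Fin n).castSucc) := by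
        rw [e1, e2, add_sub_cancel]
      rw [hm]
      exact Finset.add_mem_add (ih hjn1)
        (mem_of_ne_zero hω (hprod ⟨j, hjn⟩))
  rw [pathFinset, Fintype.mem_piFinset]
  intro i
  have : (⟨(i : ℕ), i.isLt⟩ : Fin (n + 1)) = i := Fin.ext rfl
  rw [← this]
  exact key i i.isLt

lemma main_lemma (hω : IsEnv d₁ d₂ U ω) (haut : Autonomous d₁ d₂ ω)
    (n : ℕ) (y : ℕ → Fin d₁ → ℤ) (hy0 : y 0 = 0) :
    ∀ j k, k + j = n → ∀ z : ℕ → Fin d₂ → ℤ, z 0 = 0 →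
    (∑ X ∈ pathFinset U n,
        if (∀ i : Fin (n + 1), (i : ℕ) ≤ k → X i = (y i, z i)) ∧
           (∀ i : Fin (n + 1), k + 1 ≤ (i : ℕ) → (X i).1 = y i)
        then pathP d₁ d₂ ω n X else 0)
    = (∏ i ∈ Finset.range k, ω (y i, z i) ((y (i + 1), z (i + 1)) - (y i, z i))) *
      ∏ i ∈ Finset.Ico k n, fstProb d₁ d₂ ω (y i, 0) (y (i + 1) - y i) := by
  intro j
  induction j with
  | zero =>
    intro k hk z hz0
    have hkn : n = k := by omega
    subst hkn
    set X₀ : Fin (n + 1) → Pt d₁ d₂ := fun i => (y i, z i) with hX₀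
    have hcond : ∀ X : Fin (n + 1) → Pt d₁ d₂,
        ((∀ i : Fin (n + 1), (i : ℕ) ≤ n → X i = (y i, z i)) ∧
          (∀ i : Fin (n + 1), n + 1 ≤ (i : ℕ) → (X i).1 = y i)) ↔ X = X₀ := by
      intro X
      constructor
      · rintro ⟨h1, -⟩
        funext i
        exact h1 i (Nat.lt_succ_iff.mp i.isLt)
      · rintro rfl
        exact ⟨fun i _ => rfl, fun i hi => absurd (Nat.lt_succ_iff.mp i.isLt) (by omega)⟩
    have hsum : (∑ X ∈ pathFinset U n,
        if (∀ i : Fin (n + 1), (i : ℕ) ≤ n → X i = (y i, z i)) ∧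
           (∀ i : Fin (n + 1), n + 1 ≤ (i : ℕ) → (X i).1 = y i)
        then pathP d₁ d₂ ω n X else 0) = pathP d₁ d₂ ω n X₀ := by
      have h1 : ∀ X ∈ pathFinset U n,
          (if (∀ i : Fin (n + 1), (i : ℕ) ≤ n → X i = (y i, z i)) ∧
              (∀ i : Fin (n + 1), n + 1 ≤ (i : ℕ) → (X i).1 = y i)
           then pathP d₁ d₂ ω n X else 0)
          = if X = X₀ then pathP d₁ d₂ ω n X else 0 := by
        intro X _
        exact if_congr (hcond X) rfl rfl
      rw [Finset.sum_congr rfl h1, Finset.sum_ite_eq' (pathFinset U n) X₀ (pathP d₁ d₂ ω n)]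
      by_cases hmem : X₀ ∈ pathFinset U n
      · rw [if_pos hmem]
      · rw [if_neg hmem]
        by_contra hne
        exact hmem (mem_pathFinset_of_ne_zero hω (Ne.symm hne))
    rw [hsum]
    have h0 : X₀ 0 = 0 := by
      show ((y 0, z 0) : Pt d₁ d₂) = 0
      rw [hy0, hz0]
      rfl
    rw [pathP, if_pos h0, one_mul]
    have hprod : (∏ i : Fin n, ω (X₀ i.castSucc) (X₀ i.succ - X₀ i.castSucc))
        = ∏ i ∈ Finset.range n, ω (y i, z i) ((y (i + 1), z (i + 1)) - (y i, z i)) := by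
      rw [← Fin.prod_univ_eq_prod_range
        (fun i => ω (y i, z i) ((y (i + 1), z (i + 1)) - (y i, z i))) n]
      refine Finset.prod_congr rfl fun i _ => ?_
      have e1 : X₀ i.castSucc = (y (i : ℕ), z (i : ℕ)) := rfl
      have e2 : X₀ i.succ = (y ((i : ℕ) + 1), z ((i : ℕ) + 1)) := by
        show ((y (i.succ : ℕ), z (i.succ : ℕ)) : Pt d₁ d₂) = _
        rw [Fin.val_succ]
      rw [e1, e2]
    rw [hprod, Finset.Ico_self, Finset.prod_empty, mul_one]
  | succ j ih =>
    intro k hk z hz0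
    have hkn : k < n := by omega
    set W : Finset (Fin d₂ → ℤ) := (U.image Prod.snd).image (· + z k) with hW
    -- step 1: split according to the second coordinate at time k+1
    have step1 : (∑ X ∈ pathFinset U n,
        if (∀ i : Fin (n + 1), (i : ℕ) ≤ k → X i = (y i, z i)) ∧
           (∀ i : Fin (n + 1), k + 1 ≤ (i : ℕ) → (X i).1 = y i)
        then pathP d₁ d₂ ω n X else 0)
        = ∑ v ∈ W, ∑ X ∈ pathFinset U n,
            if (∀ i : Fin (n + 1), (i : ℕ) ≤ k + 1 →
                  X i = (y i, Function.update z (k + 1) v i)) ∧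
               (∀ i : Fin (n + 1), k + 1 + 1 ≤ (i : ℕ) → (X i).1 = y i)
            then pathP d₁ d₂ ω n X else 0 := by
      rw [Finset.sum_comm]
      refine Finset.sum_congr rfl fun X _ => ?_
      by_cases hc : (∀ i : Fin (n + 1), (i : ℕ) ≤ k → X i = (y i, z i)) ∧
          (∀ i : Fin (n + 1), k + 1 ≤ (i : ℕ) → (X i).1 = y i)
      · rw [if_pos hc]
        by_cases hp : pathP d₁ d₂ ω n X = 0
        · rw [hp]
          symm
          refine Finset.sum_eq_zero fun v _ => ?_
          exact ite_self 0
        · set i1 : Fin (n + 1) := ⟨k + 1, by omega⟩ with hi1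
          set ik : Fin (n + 1) := ⟨k, by omega⟩ with hik
          have hiv1 : (i1 : ℕ) = k + 1 := rfl
          have hivk : (ik : ℕ) = k := rfl
          set v₀ : Fin d₂ → ℤ := (X i1).2 with hv₀
          have hXk : X ik = (y k, z k) := hc.1 ik (by omega)
          have hjump : X i1 - X ik ∈ U := by
            have hfac : ω (X (⟨k, hkn⟩ : Fin n).castSucc)
                (X (⟨k, hkn⟩ : Fin n).succ - X (⟨k, hkn⟩ : Fin n).castSucc) ≠ 0 := by
              have h2 : (∏ i : Fin n, ω (X i.castSucc) (X i.succ - X i.castSucc)) ≠ 0 := by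
                intro hzz
                exact hp (by rw [pathP, hzz, mul_zero])
              exact Finset.prod_ne_zero_iff.mp h2 ⟨k, hkn⟩ (Finset.mem_univ _)
            have e1 : (⟨k, hkn⟩ : Fin n).castSucc = ik := rfl
            have e2 : (⟨k, hkn⟩ : Fin n).succ = i1 := rfl
            rw [e1, e2] at hfac
            exact mem_of_ne_zero hω hfac
          have hv₀W : v₀ ∈ W := by
            have h1 : (X i1 - X ik).2 ∈ U.image Prod.snd :=
              Finset.mem_image_of_mem Prod.snd hjump
            have h2 : (X i1 - X ik).2 = v₀ - z k := by
              rw [hXk]; rfl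
            rw [h2] at h1
            exact Finset.mem_image.mpr ⟨v₀ - z k, h1, sub_add_cancel v₀ (z k)⟩
          symm
          rw [Finset.sum_eq_single_of_mem v₀ hv₀W]
          · rw [if_pos]
            constructor
            · intro i hi
              by_cases h' : (i : ℕ) ≤ k
              · rw [hc.1 i h', Function.update_of_ne (by omega)]
              · have hieq : i = i1 := Fin.ext (by omega)
                subst hieq
                have hu : Function.update z (k + 1) v₀ (i1 : ℕ) = v₀ := by
                  rw [hiv1, Function.update_self]
                rw [hu]
                have hfst : (X i1).1 = y (i1 : ℕ) := hc.2 i1 (by omega)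
                exact Prod.ext hfst rfl
            · intro i hi
              exact hc.2 i (by omega)
          · intro v hv hvne
            rw [if_neg]
            rintro ⟨h1, -⟩
            have hx1 := h1 i1 (by omega)
            have hsnd : Function.update z (k + 1) v (k + 1) = v₀ := by
              rw [hv₀, hx1]
            rw [Function.update_self] at hsnd
            exact hvne hsnd
      · rw [if_neg hc]
        symm
        refine Finset.sum_eq_zero fun v _ => ?_
        rw [if_neg]
        rintro ⟨h1, h2⟩
        apply hc
        constructor
        · intro i hi
          rw [h1 i (by omega), Function.update_of_ne (by omega)]
        · intro i hi
          by_cases h' : (i : ℕ) = k + 1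
          · rw [h1 i (by omega)]
          · exact h2 i (by omega)
    rw [step1]
    have hz0' : ∀ v : Fin d₂ → ℤ, Function.update z (k + 1) v 0 = 0 := fun v => by
      rw [Function.update_of_ne (by omega)]
      exact hz0
    have step2 : ∀ v ∈ W, (∑ X ∈ pathFinset U n,
        if (∀ i : Fin (n + 1), (i : ℕ) ≤ k + 1 →
              X i = (y i, Function.update z (k + 1) v i)) ∧
           (∀ i : Fin (n + 1), k + 1 + 1 ≤ (i : ℕ) → (X i).1 = y i)
        then pathP d₁ d₂ ω n X else 0)
        = (∏ i ∈ Finset.range k, ω (y i, z i) ((y (i + 1), z (i + 1)) - (y i, z i))) *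
          (ω (y k, z k) ((y (k + 1), v) - (y k, z k)) *
           ∏ i ∈ Finset.Ico (k + 1) n, fstProb d₁ d₂ ω (y i, 0) (y (i + 1) - y i)) := by
      intro v _
      rw [ih (k + 1) (by omega) (Function.update z (k + 1) v) (hz0' v)]
      rw [Finset.prod_range_succ]
      have hA : ∀ i ∈ Finset.range k, ω (y i, Function.update z (k + 1) v i)
          ((y (i + 1), Function.update z (k + 1) v (i + 1)) -
            (y i, Function.update z (k + 1) v i))
          = ω (y i, z i) ((y (i + 1), z (i + 1)) - (y i, z i)) := by
        intro i hi
        have hik : i < k := Finset.mem_range.mp hi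
        rw [Function.update_of_ne (by omega : i ≠ k + 1),
          Function.update_of_ne (by omega : i + 1 ≠ k + 1)]
      rw [Finset.prod_congr rfl hA]
      rw [Function.update_of_ne (by omega : k ≠ k + 1), Function.update_self]
      ring
    rw [Finset.sum_congr rfl step2, Finset.prod_eq_prod_Ico_succ_bot hkn]
    rw [← Finset.mul_sum, ← Finset.sum_mul]
    have hsumv : (∑ v ∈ W, ω (y k, z k) ((y (k + 1), v) - (y k, z k)))
        = fstProb d₁ d₂ ω (y k, 0) (y (k + 1) - y k) := by
      rw [hW, Finset.sum_image (fun a _ b _ h => add_right_cancel h)]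
      simp only [Prod.mk_sub_mk, add_sub_cancel_right]
      rw [← fstProb_eq_sum hω]
      exact haut (y k, z k) (y k, 0) rfl _
    rw [hsumv]

end Aux

/-- **Lemma 6.1.** In a static environment autonomous in the first
coordinates, for `0 ≤ m < n − 1` and prescribed values `x_i = (y_i, z_i)`,
`P_{0,ω}(X₁ = x₁,…,X_{m+1} = x_{m+1}, X^{(1)}_{m+2} = y_{m+2},…,X^{(1)}_n = y_n) ·
P_{x_m,ω}(X^{(1)}₁ = y_{m+1})
= ω(x_m, x_{m+1} − x_m) ·
P_{0,ω}(X₁ = x₁,…,X_m = x_m, X^{(1)}_{m+1} = y_{m+1},…,X^{(1)}_n = y_n)`. -/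
theorem second_coordinate_quenched_markov
    (d₁ d₂ : ℕ) (hd₁ : 1 ≤ d₁) (hd₂ : 1 ≤ d₂)
    (U : Finset (Pt d₁ d₂)) (hU : U.Nonempty)
    (ω : SEnv d₁ d₂) (hω : IsEnv d₁ d₂ U ω) (haut : Autonomous d₁ d₂ ω)
    (m n : ℕ) (hmn : m + 1 < n)
    (y : ℕ → Fin d₁ → ℤ) (z : ℕ → Fin d₂ → ℤ) (hy0 : y 0 = 0) (hz0 : z 0 = 0) :
    (∑' X : Fin (n + 1) → Pt d₁ d₂,
        if (∀ i : Fin (n + 1), (i : ℕ) ≤ m + 1 → X i = (y i, z i)) ∧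
           (∀ i : Fin (n + 1), m + 2 ≤ (i : ℕ) → (X i).1 = y i)
        then pathP d₁ d₂ ω n X else 0) *
      fstProb d₁ d₂ ω (y m, z m) (y (m + 1) - y m) =
    ω (y m, z m) ((y (m + 1), z (m + 1)) - (y m, z m)) *
      (∑' X : Fin (n + 1) → Pt d₁ d₂,
        if (∀ i : Fin (n + 1), (i : ℕ) ≤ m → X i = (y i, z i)) ∧
           (∀ i : Fin (n + 1), m + 1 ≤ (i : ℕ) → (X i).1 = y i)
        then pathP d₁ d₂ ω n X else 0) := by
  have hT1 : (∑' X : Fin (n + 1) → Pt d₁ d₂,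
      if (∀ i : Fin (n + 1), (i : ℕ) ≤ m + 1 → X i = (y i, z i)) ∧
         (∀ i : Fin (n + 1), m + 2 ≤ (i : ℕ) → (X i).1 = y i)
      then pathP d₁ d₂ ω n X else 0)
      = ∑ X ∈ pathFinset U n,
        if (∀ i : Fin (n + 1), (i : ℕ) ≤ m + 1 → X i = (y i, z i)) ∧
           (∀ i : Fin (n + 1), m + 2 ≤ (i : ℕ) → (X i).1 = y i)
        then pathP d₁ d₂ ω n X else 0 := by
    refine tsum_eq_sum fun X hX => ?_
    split
    · by_contra hne
      exact hX (mem_pathFinset_of_ne_zero hω hne)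
    · rfl
  have hT2 : (∑' X : Fin (n + 1) → Pt d₁ d₂,
      if (∀ i : Fin (n + 1), (i : ℕ) ≤ m → X i = (y i, z i)) ∧
         (∀ i : Fin (n + 1), m + 1 ≤ (i : ℕ) → (X i).1 = y i)
      then pathP d₁ d₂ ω n X else 0)
      = ∑ X ∈ pathFinset U n,
        if (∀ i : Fin (n + 1), (i : ℕ) ≤ m → X i = (y i, z i)) ∧
           (∀ i : Fin (n + 1), m + 1 ≤ (i : ℕ) → (X i).1 = y i)
        then pathP d₁ d₂ ω n X else 0 := by
    refine tsum_eq_sum fun X hX => ?_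
    split
    · by_contra hne
      exact hX (mem_pathFinset_of_ne_zero hω hne)
    · rfl
  rw [hT1, hT2]
  have e1 : (∑ X ∈ pathFinset U n,
      if (∀ i : Fin (n + 1), (i : ℕ) ≤ m + 1 → X i = (y i, z i)) ∧
         (∀ i : Fin (n + 1), m + 2 ≤ (i : ℕ) → (X i).1 = y i)
      then pathP d₁ d₂ ω n X else 0)
      = (∏ i ∈ Finset.range (m + 1), ω (y i, z i) ((y (i + 1), z (i + 1)) - (y i, z i))) *
        ∏ i ∈ Finset.Ico (m + 1) n, fstProb d₁ d₂ ω (y i, 0) (y (i + 1) - y i) :=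
    main_lemma hω haut n y hy0 (n - (m + 1)) (m + 1) (by omega) z hz0
  have e2 : (∑ X ∈ pathFinset U n,
      if (∀ i : Fin (n + 1), (i : ℕ) ≤ m → X i = (y i, z i)) ∧
         (∀ i : Fin (n + 1), m + 1 ≤ (i : ℕ) → (X i).1 = y i)
      then pathP d₁ d₂ ω n X else 0)
      = (∏ i ∈ Finset.range m, ω (y i, z i) ((y (i + 1), z (i + 1)) - (y i, z i))) *
        ∏ i ∈ Finset.Ico m n, fstProb d₁ d₂ ω (y i, 0) (y (i + 1) - y i) :=
    main_lemma hω haut n y hy0 (n - m) m (by omega) z hz0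
  rw [e1, e2, Finset.prod_range_succ,
    Finset.prod_eq_prod_Ico_succ_bot (show m < n by omega)
      (fun i => fstProb d₁ d₂ ω (y i, 0) (y (i + 1) - y i)),
    haut (y m, z m) (y m, 0) rfl (y (m + 1) - y m)]
  ring

end AutonomousFirstCoordinates
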